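/- If (X_1, X_2) is conditionally iid, then Kendall's tau of (X_1, X_2) is non-negative. Specifically, for two independent copies (X_1^{(1)},X_2^{(1)}) and (X_1^{(2)},X_2^{(2)}) of (X_1,X_2), the probability of concordance minus the probability of discordance equals E[(∫ H^{(2)}(x-) dH^{(1)}(x) - ∫ H^{(1)}(x-) dH^{(2)}(x))^2] ≥ 0, where H^{(1)}, H^{(2)} are the iid latent random distribution functions of the two copies. -/

import Mathlib

open MeasureTheory Filter

/-- A probability law on `ℝ^d` is *conditionally iid* if its distribution function is a
mixture, over a probability measure `γ` on the space of one-dimensional distribution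
functions, of products `h(x_1) ⋯ h(x_d)`. -/
def IsCondIID {d : ℕ} (μ : Measure (Fin d → ℝ)) : Prop :=
  ∃ γ : Measure (ℝ → ℝ), IsProbabilityMeasure γ ∧
    (∀ᵐ h ∂γ, Monotone h ∧ (∀ t, ContinuousWithinAt h (Set.Ici t) t) ∧
      Tendsto h atBot (nhds 0) ∧ Tendsto h atTop (nhds 1)) ∧
    ∀ x : Fin d → ℝ, (μ {y | ∀ i, y i ≤ x i}).toReal = ∫ h, ∏ i, h (x i) ∂γ

section KendallAuxSection

open ProbabilityTheory Set
open scoped ENNReal NNReal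

namespace KendallAux

def Good (h : ℝ → ℝ) : Prop :=
  Monotone h ∧ (∀ t, ContinuousWithinAt h (Set.Ici t) t) ∧
    Tendsto h atBot (nhds 0) ∧ Tendsto h atTop (nhds 1)

noncomputable def F : (ℝ → ℝ) → ℚ → ℝ := fun h q => h q

lemma measurable_F : Measurable F :=
  measurable_pi_lambda _ fun q => measurable_pi_apply (q : ℝ)

lemma Good.iInf_gt {h : ℝ → ℝ} (hh : Good h) (x : ℝ) :
    ⨅ r : { r' : ℚ // x < ↑r' }, h ↑r = h x := by
  obtain ⟨q0, hq0⟩ := exists_rat_gt x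
  haveI : Nonempty { r' : ℚ // x < ↑r' } := ⟨⟨q0, hq0⟩⟩
  have hbdd : BddBelow (Set.range fun r : { r' : ℚ // x < ↑r' } => h ↑r) :=
    ⟨h x, by rintro _ ⟨r, rfl⟩; exact hh.1 r.2.le⟩
  refine le_antisymm ?_ (le_ciInf fun r => hh.1 r.2.le)
  refine le_of_forall_pos_le_add fun ε hε => ?_
  have hev : ∀ᶠ y in nhdsWithin x (Set.Ici x), h y < h x + ε :=
    (hh.2.1 x).eventually_lt_const (by linarith)
  obtain ⟨u, hu, hIco⟩ := (nhdsGE_basis_of_exists_gt ⟨x + 1, lt_add_one x⟩).eventually_iff.mp hev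
  obtain ⟨q, hq1, hq2⟩ := exists_rat_btwn hu
  exact (ciInf_le hbdd ⟨q, hq1⟩).trans (hIco ⟨hq1.le, hq2⟩).le

lemma Good.isRatStieltjesPoint {h : ℝ → ℝ} (hh : Good h) : IsRatStieltjesPoint F h where
  mono := fun a b hab => hh.1 (by exact_mod_cast hab)
  tendsto_atTop_one := hh.2.2.2.comp (tendsto_ratCast_atTop_iff.mpr tendsto_id)
  tendsto_atBot_zero := hh.2.2.1.comp (tendsto_ratCast_atBot_iff.mpr tendsto_id)
  iInf_rat_gt_eq := by
    intro t
    have h1 : ⨅ r : Set.Ioi t, F h ↑r = ⨅ r : { r' : ℚ // (t : ℝ) < ↑r' }, h ↑r := by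
      rw [iInf, iInf]
      congr 1
      ext y
      constructor
      · rintro ⟨r, rfl⟩; exact ⟨⟨r.1, by exact_mod_cast r.2⟩, rfl⟩
      · rintro ⟨r, rfl⟩; exact ⟨⟨r.1, by exact_mod_cast r.2⟩, rfl⟩
    rw [h1, hh.iInf_gt]
    rfl

noncomputable def G : (ℝ → ℝ) → StieltjesFunction ℝ :=
  stieltjesOfMeasurableRat F measurable_F

lemma Good.G_eq {h : ℝ → ℝ} (hh : Good h) (x : ℝ) : G h x = h x := by
  rw [G, ← (stieltjesOfMeasurableRat F measurable_F h).iInf_rat_gt_eq x]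
  have : ∀ r : { r' : ℚ // x < ↑r' },
      stieltjesOfMeasurableRat F measurable_F h ↑r = h ↑r := by
    intro r
    rw [stieltjesOfMeasurableRat_eq, toRatCDF_of_isRatStieltjesPoint hh.isRatStieltjesPoint]
    rfl
  rw [iInf_congr this, hh.iInf_gt]

end KendallAux

namespace KendallAux

noncomputable def mK : Kernel (ℝ → ℝ) ℝ where
  toFun := fun h => (G h).measure
  measurable' := measurable_measure_stieltjesOfMeasurableRat measurable_F

instance : IsMarkovKernel mK :=
  ⟨fun h => ProbabilityTheory.instIsProbabilityMeasure_stieltjesOfMeasurableRat measurable_F h⟩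

lemma mK_apply (h : ℝ → ℝ) : mK h = (G h).measure := rfl

noncomputable def e : ℝ × ℝ ≃ᵐ (Fin 2 → ℝ) := (MeasurableEquiv.finTwoArrow).symm

lemma e_apply_zero (p : ℝ × ℝ) : e p 0 = p.1 := by
  simp [e, MeasurableEquiv.finTwoArrow]

lemma e_apply_one (p : ℝ × ℝ) : e p 1 = p.2 := by
  simp [e, MeasurableEquiv.finTwoArrow]

noncomputable def κ : Kernel (ℝ → ℝ) (Fin 2 → ℝ) := Kernel.map (mK ×ₖ mK) e

lemma κ_apply (h : ℝ → ℝ) : κ h = ((mK h).prod (mK h)).map e := by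
  rw [κ, Kernel.map_apply _ e.measurable, Kernel.prod_apply]

instance : IsMarkovKernel κ := by
  rw [κ]; exact Kernel.IsMarkovKernel.map _ e.measurable

noncomputable def K2 : Kernel ((ℝ → ℝ) × (ℝ → ℝ)) ((Fin 2 → ℝ) × (Fin 2 → ℝ)) :=
  (Kernel.prodMkRight _ κ) ×ₖ (Kernel.prodMkLeft _ κ)

lemma K2_apply (p : (ℝ → ℝ) × (ℝ → ℝ)) : K2 p = (κ p.1).prod (κ p.2) := by
  rw [K2, Kernel.prod_apply, Kernel.prodMkRight_apply, Kernel.prodMkLeft_apply]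

instance : IsMarkovKernel K2 := by
  rw [K2]; infer_instance

end KendallAux

namespace KendallAux

lemma amgm (a b : ℝ≥0∞) : a * b + b * a ≤ a * a + b * b := by
  wlog hab : a ≤ b generalizing a b
  · rw [add_comm (a * b), add_comm (a * a)]; exact this b a (le_of_not_ge hab)
  obtain ⟨c, rfl⟩ : ∃ c, b = a + c := ⟨b - a, (add_tsub_cancel_of_le hab).symm⟩
  have : a * (a + c) + (a + c) * a = a * a + a * a + (a * c + a * c) := by ring
  rw [this]
  have h2 : a * a + (a + c) * (a + c) = a * a + a * a + (a * c + a * c) + c * c := by ring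
  rw [h2]
  exact le_self_add

lemma prod4_apply (M1 M2 : Measure ℝ) [IsProbabilityMeasure M1] [IsProbabilityMeasure M2]
    (f g : ℝ → Set ℝ)
    (hfg : MeasurableSet {q : (ℝ × ℝ) × ℝ × ℝ | q.2.1 ∈ f q.1.1 ∧ q.2.2 ∈ g q.1.2})
    (hf : AEMeasurable (fun x => M2 (f x)) M1) (hg : AEMeasurable (fun x => M2 (g x)) M1) :
    ((M1.prod M1).prod (M2.prod M2)) {q | q.2.1 ∈ f q.1.1 ∧ q.2.2 ∈ g q.1.2}
      = (∫⁻ x, M2 (f x) ∂M1) * (∫⁻ x, M2 (g x) ∂M1) := by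
  rw [Measure.prod_apply hfg]
  have h1 : ∀ ab : ℝ × ℝ,
      (Prod.mk ab ⁻¹' {q : (ℝ × ℝ) × ℝ × ℝ | q.2.1 ∈ f q.1.1 ∧ q.2.2 ∈ g q.1.2})
      = f ab.1 ×ˢ g ab.2 := fun ab => rfl
  simp_rw [h1, Measure.prod_prod]
  exact lintegral_prod_mul hf hg

lemma core (M1 M2 : Measure ℝ) [IsProbabilityMeasure M1] [IsProbabilityMeasure M2] :
    ((M1.prod M1).prod (M2.prod M2))
        {q : (ℝ × ℝ) × ℝ × ℝ | (q.1.1 - q.2.1) * (q.1.2 - q.2.2) < 0}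
      ≤ ((M1.prod M1).prod (M2.prod M2))
        {q : (ℝ × ℝ) × ℝ × ℝ | 0 < (q.1.1 - q.2.1) * (q.1.2 - q.2.2)} := by
  have hIio : AEMeasurable (fun x => M2 (Set.Iio x)) M1 :=
    (Monotone.measurable fun x y hxy => measure_mono (Set.Iio_subset_Iio hxy)).aemeasurable
  have hIoi : AEMeasurable (fun x => M2 (Set.Ioi x)) M1 :=
    (Antitone.measurable fun x y hxy => measure_mono (Set.Ioi_subset_Ioi hxy)).aemeasurable
  set p := ∫⁻ x, M2 (Set.Iio x) ∂M1 with hp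
  set r := ∫⁻ x, M2 (Set.Ioi x) ∂M1 with hr
  have m11 : Measurable fun q : (ℝ × ℝ) × ℝ × ℝ => q.1.1 := measurable_fst.comp measurable_fst
  have m12 : Measurable fun q : (ℝ × ℝ) × ℝ × ℝ => q.1.2 := measurable_snd.comp measurable_fst
  have m21 : Measurable fun q : (ℝ × ℝ) × ℝ × ℝ => q.2.1 := measurable_fst.comp measurable_snd
  have m22 : Measurable fun q : (ℝ × ℝ) × ℝ × ℝ => q.2.2 := measurable_snd.comp measurable_snd
  have hset : ∀ (f g : ℝ → Set ℝ), (∀ x, f x = Set.Iio x ∨ f x = Set.Ioi x) →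
      True := fun _ _ _ => trivial
  -- the four basic sets
  have hmm : MeasurableSet {q : (ℝ × ℝ) × ℝ × ℝ | q.2.1 ∈ Set.Iio q.1.1 ∧ q.2.2 ∈ Set.Iio q.1.2} :=
    (measurableSet_lt m21 m11).inter (measurableSet_lt m22 m12)
  have hpp : MeasurableSet {q : (ℝ × ℝ) × ℝ × ℝ | q.2.1 ∈ Set.Ioi q.1.1 ∧ q.2.2 ∈ Set.Ioi q.1.2} :=
    (measurableSet_lt m11 m21).inter (measurableSet_lt m12 m22)
  have hmp : MeasurableSet {q : (ℝ × ℝ) × ℝ × ℝ | q.2.1 ∈ Set.Iio q.1.1 ∧ q.2.2 ∈ Set.Ioi q.1.2} :=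
    (measurableSet_lt m21 m11).inter (measurableSet_lt m12 m22)
  have hpm : MeasurableSet {q : (ℝ × ℝ) × ℝ × ℝ | q.2.1 ∈ Set.Ioi q.1.1 ∧ q.2.2 ∈ Set.Iio q.1.2} :=
    (measurableSet_lt m11 m21).inter (measurableSet_lt m22 m12)
  have hTc : {q : (ℝ × ℝ) × ℝ × ℝ | 0 < (q.1.1 - q.2.1) * (q.1.2 - q.2.2)}
      = {q : (ℝ × ℝ) × ℝ × ℝ | q.2.1 ∈ Set.Iio q.1.1 ∧ q.2.2 ∈ Set.Iio q.1.2}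
        ∪ {q : (ℝ × ℝ) × ℝ × ℝ | q.2.1 ∈ Set.Ioi q.1.1 ∧ q.2.2 ∈ Set.Ioi q.1.2} := by
    ext q
    simp only [Set.mem_setOf_eq, Set.mem_union, Set.mem_Iio, Set.mem_Ioi, mul_pos_iff,
      sub_pos, sub_neg]
  have hTd : {q : (ℝ × ℝ) × ℝ × ℝ | (q.1.1 - q.2.1) * (q.1.2 - q.2.2) < 0}
      = {q : (ℝ × ℝ) × ℝ × ℝ | q.2.1 ∈ Set.Iio q.1.1 ∧ q.2.2 ∈ Set.Ioi q.1.2}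
        ∪ {q : (ℝ × ℝ) × ℝ × ℝ | q.2.1 ∈ Set.Ioi q.1.1 ∧ q.2.2 ∈ Set.Iio q.1.2} := by
    ext q
    simp only [Set.mem_setOf_eq, Set.mem_union, Set.mem_Iio, Set.mem_Ioi, mul_neg_iff,
      sub_pos, sub_neg]
  rw [hTc, hTd]
  rw [measure_union ?djc hpp, measure_union ?djd hpm]
  case djc =>
    rw [Set.disjoint_left]
    rintro q ⟨h1, _⟩ ⟨h2, _⟩
    exact lt_asymm h1 (Set.mem_Ioi.1 h2)
  case djd =>
    rw [Set.disjoint_left]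
    rintro q ⟨h1, _⟩ ⟨h2, _⟩
    exact lt_asymm h1 (Set.mem_Ioi.1 h2)
  rw [prod4_apply M1 M2 _ _ hmm hIio hIio, prod4_apply M1 M2 _ _ hpp hIoi hIoi,
    prod4_apply M1 M2 _ _ hmp hIio hIoi, prod4_apply M1 M2 _ _ hpm hIoi hIio]
  exact amgm p r

end KendallAux

namespace KendallAux

def Ec : Set ((Fin 2 → ℝ) × (Fin 2 → ℝ)) := {p | 0 < (p.1 0 - p.2 0) * (p.1 1 - p.2 1)}
def Ed : Set ((Fin 2 → ℝ) × (Fin 2 → ℝ)) := {p | (p.1 0 - p.2 0) * (p.1 1 - p.2 1) < 0}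

lemma measurable_phi : Measurable fun p : (Fin 2 → ℝ) × (Fin 2 → ℝ) =>
    (p.1 0 - p.2 0) * (p.1 1 - p.2 1) :=
  ((((measurable_pi_apply 0).comp measurable_fst).sub
    ((measurable_pi_apply 0).comp measurable_snd)).mul
   (((measurable_pi_apply 1).comp measurable_fst).sub
    ((measurable_pi_apply 1).comp measurable_snd)))

lemma measurableSet_Ec : MeasurableSet Ec := measurableSet_lt measurable_const measurable_phi
lemma measurableSet_Ed : MeasurableSet Ed := measurableSet_lt measurable_phi measurable_const

lemma K2_le (hh : (ℝ → ℝ) × (ℝ → ℝ)) : K2 hh Ed ≤ K2 hh Ec := by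
  rw [K2_apply, κ_apply, κ_apply, Measure.map_prod_map _ _ e.measurable e.measurable,
    Measure.map_apply (e.measurable.prodMap e.measurable) measurableSet_Ed,
    Measure.map_apply (e.measurable.prodMap e.measurable) measurableSet_Ec]
  have hc : Prod.map e e ⁻¹' Ec
      = {q : (ℝ × ℝ) × ℝ × ℝ | 0 < (q.1.1 - q.2.1) * (q.1.2 - q.2.2)} := by
    ext q; simp [Ec, e_apply_zero, e_apply_one]
  have hd : Prod.map e e ⁻¹' Ed
      = {q : (ℝ × ℝ) × ℝ × ℝ | (q.1.1 - q.2.1) * (q.1.2 - q.2.2) < 0} := by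
    ext q; simp [Ed, e_apply_zero, e_apply_one]
  rw [hc, hd]
  exact core _ _

end KendallAux

namespace KendallAux

instance bind_prob (γ : Measure (ℝ → ℝ)) [IsProbabilityMeasure γ] :
    IsProbabilityMeasure (γ.bind ⇑κ) := by
  constructor
  rw [Measure.bind_apply MeasurableSet.univ κ.measurable.aemeasurable]
  simp [measure_univ]

lemma mu_eq_bind (μ : Measure (Fin 2 → ℝ)) [IsProbabilityMeasure μ]
    (γ : Measure (ℝ → ℝ)) [IsProbabilityMeasure γ]
    (hae : ∀ᵐ h ∂γ, Good h)
    (hcdf : ∀ x : Fin 2 → ℝ, (μ {y | ∀ i, y i ≤ x i}).toReal = ∫ h, ∏ i, h (x i) ∂γ) :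
    μ = γ.bind ⇑κ := by
  have hC : ∀ _i : Fin 2, MeasurableSpace.generateFrom (Set.range Set.Iic)
      = (inferInstance : MeasurableSpace ℝ) :=
    fun _ => (borel_eq_generateFrom_Iic ℝ).symm.trans BorelSpace.measurable_eq.symm
  have hspan : ∀ _i : Fin 2, IsCountablySpanning (Set.range (Set.Iic : ℝ → Set ℝ)) := by
    intro _
    refine ⟨fun n => Set.Iic (n : ℝ), fun n => ⟨n, rfl⟩, ?_⟩
    rw [Set.iUnion_eq_univ_iff]
    exact fun x => (exists_nat_ge x).imp fun n hn => Set.mem_Iic.2 hn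
  refine ext_of_generate_finite _ (generateFrom_eq_pi hC hspan).symm
    (IsPiSystem.pi fun _ => isPiSystem_Iic) ?_ ?_
  · rintro s ⟨t, ht, rfl⟩
    choose x hx using fun i => ht i (Set.mem_univ i)
    have hst : Set.pi Set.univ t = {y : Fin 2 → ℝ | ∀ i, y i ≤ x i} := by
      ext y
      simp only [Set.mem_pi, Set.mem_univ, forall_true_left, Set.mem_setOf_eq]
      refine forall_congr' fun i => ?_
      rw [← hx i, Set.mem_Iic]
    rw [hst]
    have hquadmeas : MeasurableSet {y : Fin 2 → ℝ | ∀ i, y i ≤ x i} := by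
      have : {y : Fin 2 → ℝ | ∀ i, y i ≤ x i} = Set.pi Set.univ fun i => Set.Iic (x i) := by
        ext y
        simp only [Set.mem_pi, Set.mem_univ, forall_true_left, Set.mem_Iic, Set.mem_setOf_eq]
      rw [this]
      exact MeasurableSet.univ_pi fun i => measurableSet_Iic
    have hν : γ.bind ⇑κ {y | ∀ i, y i ≤ x i}
        = ∫⁻ h, ENNReal.ofReal (G h (x 0)) * ENNReal.ofReal (G h (x 1)) ∂γ := by
      rw [Measure.bind_apply hquadmeas κ.measurable.aemeasurable]
      refine lintegral_congr fun h => ?_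
      rw [κ_apply, Measure.map_apply e.measurable hquadmeas]
      have hpre : ⇑e ⁻¹' {y | ∀ i, y i ≤ x i} = Set.Iic (x 0) ×ˢ Set.Iic (x 1) := by
        ext pq
        simp only [Set.mem_preimage, Set.mem_setOf_eq, Set.mem_prod, Set.mem_Iic,
          Fin.forall_fin_two, e_apply_zero, e_apply_one]
      rw [hpre, mK_apply, Measure.prod_prod]
      simp only [G]
      rw [measure_stieltjesOfMeasurableRat_Iic measurable_F h (x 0),
        measure_stieltjesOfMeasurableRat_Iic measurable_F h (x 1)]
    have hmeas2 : Measurable fun h : ℝ → ℝ => h (x 0) * h (x 1) :=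
      (measurable_pi_apply _).mul (measurable_pi_apply _)
    have hbound : ∀ᵐ h ∂γ, 0 ≤ h (x 0) ∧ h (x 0) ≤ 1 ∧ 0 ≤ h (x 1) ∧ h (x 1) ≤ 1 := by
      filter_upwards [hae] with h hg
      exact ⟨hg.1.le_of_tendsto hg.2.2.1 _, hg.1.ge_of_tendsto hg.2.2.2 _,
        hg.1.le_of_tendsto hg.2.2.1 _, hg.1.ge_of_tendsto hg.2.2.2 _⟩
    have hint : Integrable (fun h : ℝ → ℝ => h (x 0) * h (x 1)) γ := by
      refine Integrable.mono' (integrable_const (1 : ℝ)) hmeas2.aestronglyMeasurable ?_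
      filter_upwards [hbound] with h hb
      rw [Real.norm_eq_abs, abs_mul, abs_of_nonneg hb.1, abs_of_nonneg hb.2.2.1]
      exact mul_le_one₀ hb.2.1 hb.2.2.1 hb.2.2.2
    have hnn : 0 ≤ᵐ[γ] fun h : ℝ → ℝ => h (x 0) * h (x 1) := by
      filter_upwards [hbound] with h hb
      exact mul_nonneg hb.1 hb.2.2.1
    have hν2 : γ.bind ⇑κ {y | ∀ i, y i ≤ x i}
        = ENNReal.ofReal (∫ h, h (x 0) * h (x 1) ∂γ) := by
      rw [hν, ofReal_integral_eq_lintegral_ofReal hint hnn]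
      refine lintegral_congr_ae ?_
      filter_upwards [hae, hbound] with h hg hb
      rw [hg.G_eq, hg.G_eq, ENNReal.ofReal_mul hb.1]
    have htoReal : (μ {y | ∀ i, y i ≤ x i}).toReal
        = (γ.bind ⇑κ {y | ∀ i, y i ≤ x i}).toReal := by
      rw [hcdf x, hν2, ENNReal.toReal_ofReal (integral_nonneg_of_ae hnn)]
      refine integral_congr_ae (Eventually.of_forall fun h => ?_)
      simp [Fin.prod_univ_two]
    exact (ENNReal.toReal_eq_toReal_iff' (measure_ne_top _ _) (measure_ne_top _ _)).1 htoReal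
  · rw [measure_univ, measure_univ]

lemma prod_bind (γ : Measure (ℝ → ℝ)) [IsProbabilityMeasure γ] :
    (γ.bind ⇑κ).prod (γ.bind ⇑κ) = (γ.prod γ).bind ⇑K2 := by
  have hK2univ : ∀ hh : (ℝ → ℝ) × (ℝ → ℝ), K2 hh Set.univ = 1 := fun hh => measure_univ
  refine ext_of_generate_finite _ generateFrom_prod.symm isPiSystem_prod ?_ ?_
  · rintro s ⟨s1, hs1, s2, hs2, rfl⟩
    simp only [Set.mem_setOf_eq] at hs1 hs2
    rw [Measure.prod_prod, Measure.bind_apply (hs1.prod hs2) K2.measurable.aemeasurable]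
    have hK2 : ∀ hh : (ℝ → ℝ) × (ℝ → ℝ), K2 hh (s1 ×ˢ s2) = κ hh.1 s1 * κ hh.2 s2 := by
      intro hh; rw [K2_apply, Measure.prod_prod]
    simp_rw [hK2]
    rw [lintegral_prod_mul (κ.measurable_coe hs1).aemeasurable
        (κ.measurable_coe hs2).aemeasurable,
      Measure.bind_apply hs1 κ.measurable.aemeasurable, Measure.bind_apply hs2 κ.measurable.aemeasurable]
  · rw [measure_univ, Measure.bind_apply MeasurableSet.univ K2.measurable.aemeasurable]
    simp [measure_univ]

end KendallAux

end KendallAuxSection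

/-- If `(X_1, X_2)` is conditionally iid, then Kendall's tau is non-negative: for two
independent copies of the pair, the probability of concordance minus the probability of
discordance is non-negative. -/
theorem condIID_kendall_tau_nonneg (μ : Measure (Fin 2 → ℝ)) [IsProbabilityMeasure μ]
    (hμ : IsCondIID μ) :
    0 ≤ ((μ.prod μ) {p : (Fin 2 → ℝ) × (Fin 2 → ℝ) |
            0 < (p.1 0 - p.2 0) * (p.1 1 - p.2 1)}).toReal -
         ((μ.prod μ) {p : (Fin 2 → ℝ) × (Fin 2 → ℝ) |
            (p.1 0 - p.2 0) * (p.1 1 - p.2 1) < 0}).toReal := by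
  obtain ⟨γ, hγprob, hγae, hγcdf⟩ := hμ
  haveI := hγprob
  have hμeq : μ = γ.bind ⇑KendallAux.κ := KendallAux.mu_eq_bind μ γ hγae hγcdf
  have key : (μ.prod μ) KendallAux.Ed ≤ (μ.prod μ) KendallAux.Ec := by
    rw [hμeq, KendallAux.prod_bind,
      Measure.bind_apply KendallAux.measurableSet_Ed KendallAux.K2.measurable.aemeasurable,
      Measure.bind_apply KendallAux.measurableSet_Ec KendallAux.K2.measurable.aemeasurable]
    exact lintegral_mono KendallAux.K2_le
  rw [sub_nonneg]
  exact ENNReal.toReal_mono (measure_ne_top _ _) key
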